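/- Let (x_n) be a positive nonincreasing real sequence with ∑_n x_n = +∞, lim_{n→∞} x_n = 0, and L := liminf_{n→∞} x_{n+1}/x_n > 1/2. Then there exists θ ∈ (0,1) such that for every ℓ > 0 there is a strictly increasing sequence of indices (n_k) with ∑_k x_{n_k} = ℓ and x_{n_k} = O(θ^k). -/

import Mathlib

open Filter Topology Finset

open scoped Classical in
noncomputable def nextIdx (x : ℕ → ℝ) (p : ℕ) (r : ℝ) : ℕ :=
  if h : ∃ m, p < m ∧ x m < r then Nat.find h else 0

noncomputable def greedy (x : ℕ → ℝ) (N : ℕ) (ℓ : ℝ) : ℕ → ℕ × ℝ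
  | 0 => (nextIdx x N ℓ, ℓ - x (nextIdx x N ℓ))
  | k+1 => (nextIdx x (greedy x N ℓ k).1 (greedy x N ℓ k).2,
      (greedy x N ℓ k).2 - x (nextIdx x (greedy x N ℓ k).1 (greedy x N ℓ k).2))

theorem greedy_main (x : ℕ → ℝ) (hpos : ∀ n, 0 < x n) (hanti : Antitone x)
    (hdiv : ¬ Summable x) (hlim : Tendsto x atTop (𝓝 0))
    (c : ℝ) (hc1 : 1/2 < c) (hc2 : c < 1) (N : ℕ)
    (hN : ∀ m, N ≤ m → c * x m ≤ x (m+1))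
    (ℓ : ℝ) (hℓ : 0 < ℓ) :
    ∃ n : ℕ → ℕ, StrictMono n ∧ HasSum (fun k => x (n k)) ℓ ∧
      ∃ C : ℝ, ∀ k, x (n k) ≤ C * c ^ k := by
  classical
  have hc0 : 0 < c := by linarith
  set n : ℕ → ℕ := fun k => (greedy x N ℓ k).1 with hn
  set r : ℕ → ℝ := fun k => (greedy x N ℓ k).2 with hrdef
  have hex : ∀ (p : ℕ) (ρ : ℝ), 0 < ρ → ∃ m, p < m ∧ x m < ρ := by
    intro p ρ hρ
    have h1 : ∀ᶠ m in atTop, x m < ρ := hlim.eventually (gt_mem_nhds hρ)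
    exact ((eventually_gt_atTop p).and h1).exists
  have hfind : ∀ (p : ℕ) (ρ : ℝ), 0 < ρ →
      p < nextIdx x p ρ ∧ x (nextIdx x p ρ) < ρ ∧
        ∀ m, p < m → x m < ρ → nextIdx x p ρ ≤ m := by
    intro p ρ hρ
    have h := hex p ρ hρ
    rw [nextIdx, dif_pos h]
    exact ⟨(Nat.find_spec h).1, (Nat.find_spec h).2,
      fun m h1 h2 => Nat.find_min' h ⟨h1, h2⟩⟩
  have hr0 : r 0 = ℓ - x (n 0) := rfl
  have hnS : ∀ k, n (k+1) = nextIdx x (n k) (r k) := fun k => rfl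
  have hrS : ∀ k, r (k+1) = r k - x (n (k+1)) := fun k => rfl
  -- positivity of remainders
  have hrpos : ∀ k, 0 < r k := by
    intro k
    induction k with
    | zero =>
        rw [hr0]
        have h := (hfind N ℓ hℓ).2.1
        rw [show nextIdx x N ℓ = n 0 from rfl] at h
        linarith
    | succ k ih =>
        rw [hrS k, hnS k]
        have := (hfind (n k) (r k) ih).2.1
        linarith
  have hstep : ∀ k, n k < n (k+1) ∧ x (n (k+1)) < r k ∧
      ∀ m, n k < m → x m < r k → n (k+1) ≤ m := by
    intro k; rw [hnS k]; exact hfind (n k) (r k) (hrpos k)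
  have hmono : StrictMono n := strictMono_nat_of_lt_succ fun k => (hstep k).1
  have hN0 : N < n 0 := (hfind N ℓ hℓ).1
  have hNk : ∀ k, N < n k := fun k => lt_of_lt_of_le hN0 (hmono.le_iff_le.mpr (Nat.zero_le k))
  have hx0 : x (n 0) < ℓ := (hfind N ℓ hℓ).2.1
  have hrle : ∀ k, r k ≤ ℓ := by
    intro k
    induction k with
    | zero => rw [hr0]; have := hpos (n 0); linarith
    | succ k ih => rw [hrS k]; have := hpos (n (k+1)); linarith
  have hsum : ∀ K, ∑ k ∈ range (K+1), x (n k) = ℓ - r K := by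
    intro K
    induction K with
    | zero => rw [Finset.sum_range_one, hr0]; ring
    | succ K ih => rw [Finset.sum_range_succ, ih, hrS K]; ring
  -- non-consecutive step bound
  have hA : ∀ k, n k + 1 < n (k+1) → c * r k ≤ x (n (k+1)) := by
    intro k hk
    set m := n (k+1) - 1 with hm
    have hm1 : n k < m := by omega
    have hm2 : m + 1 = n (k+1) := by omega
    have hxm : ¬ x m < r k := by
      intro hlt
      have := (hstep k).2.2 m hm1 hlt
      omega
    push_neg at hxm
    have hNm : N ≤ m := le_of_lt (lt_trans (hNk k) hm1)
    have := hN m hNm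
    rw [hm2] at this
    calc c * r k ≤ c * x m := by nlinarith
    _ ≤ x (n (k+1)) := this
  -- consecutive ratio bound
  have hB : ∀ k, n (k+1) = n k + 1 → c * x (n k) ≤ x (n (k+1)) := by
    intro k hk; rw [hk]; exact hN (n k) (le_of_lt (hNk k))
  set B : ℝ := c / (1 - c) with hBdef
  have h1c : 0 < 1 - c := by linarith
  have hBc : (1 - c) * B = c := by rw [hBdef]; field_simp
  have hBpos : 0 < B := div_pos hc0 h1c
  have claim2 : ∀ k, n k + 1 < n (k+1) → r (k+1) ≤ B * x (n (k+1)) := by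
    intro k hk
    have h1 := hA k hk
    have h2 := hrS k
    have h3 := hrpos k
    have h4 := hpos (n (k+1))
    -- r(k+1) ≤ (1-c) r k ≤ ((1-c)/c) x(n(k+1)) ≤ B x(n(k+1))
    nlinarith [hpos (n (k+1)), mul_pos hc0 h3]
  have claim1 : ∀ k, r k ≤ B * x (n k) → r (k+1) ≤ B * x (n (k+1)) ∧ r (k+1) ≤ c * r k := by
    intro k hQ
    rcases Nat.lt_or_ge (n k + 1) (n (k+1)) with hk | hk
    · refine ⟨claim2 k hk, ?_⟩
      have h1 := hA k hk
      have h2 := hrS k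
      have h3 := hrpos k
      nlinarith
    · have hconsec : n (k+1) = n k + 1 := by have := (hstep k).1; omega
      have h1 := hB k hconsec
      have h2 := hrS k
      have h3 := hrpos k
      have h4 := hpos (n k)
      have h5 := hpos (n (k+1))
      constructor
      · -- r k - x(n(k+1)) ≤ B x(n(k+1))
        nlinarith [mul_le_mul_of_nonneg_left h1 (le_of_lt hBpos)]
      · -- r k - x(n(k+1)) ≤ c r k
        nlinarith [mul_le_mul_of_nonneg_left hQ (le_of_lt h1c)]
  -- there exists k0 with Q k0
  have hk0 : ∃ k0, r k0 ≤ B * x (n k0) := by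
    by_contra hno
    push_neg at hno
    have hcons : ∀ k, n (k+1) = n k + 1 := by
      intro k
      rcases Nat.lt_or_ge (n k + 1) (n (k+1)) with hk | hk
      · exact absurd (claim2 k hk) (not_le.mpr (hno (k+1)))
      · have := (hstep k).1; omega
    have hlin : ∀ k, n k = n 0 + k := by
      intro k
      induction k with
      | zero => rfl
      | succ k ih => rw [hcons k, ih]; omega
    have hsummable : Summable (fun j => x (j + (n 0 + 1))) := by
      apply summable_of_sum_range_le (c := ℓ)
      · intro j; exact le_of_lt (hpos _)
      · intro K
        have h1 : ∑ j ∈ range K, x (j + (n 0 + 1)) = ∑ j ∈ range K, x (n (j+1)) := by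
          apply Finset.sum_congr rfl
          intro j _
          congr 1
          rw [hlin (j+1)]
          omega
        rw [h1]
        have h2 : ∑ j ∈ range (K+1), x (n j) = ∑ j ∈ range K, x (n (j+1)) + x (n 0) :=
          Finset.sum_range_succ' (fun j => x (n j)) K
        have h3 := hsum K
        have h4 := hrpos K
        have h5 := hpos (n 0)
        linarith
    exact hdiv ((summable_nat_add_iff (n 0 + 1)).mp hsummable)
  obtain ⟨k0, hQ0⟩ := hk0
  have hdecay : ∀ j, r (k0 + j) ≤ B * x (n (k0 + j)) ∧ r (k0 + j) ≤ c ^ j * r k0 := by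
    intro j
    induction j with
    | zero => exact ⟨hQ0, by simp⟩
    | succ j ih =>
        have h := claim1 (k0 + j) ih.1
        refine ⟨h.1, ?_⟩
        have h2 : c * r (k0 + j) ≤ c * (c ^ j * r k0) :=
          mul_le_mul_of_nonneg_left ih.2 hc0.le
        calc r (k0 + (j+1)) = r (k0 + j + 1) := rfl
        _ ≤ c * r (k0 + j) := h.2
        _ ≤ c * (c ^ j * r k0) := h2
        _ = c ^ (j+1) * r k0 := by ring
  -- r tends to 0
  have hrtend : Tendsto r atTop (𝓝 0) := by
    have htend0 : Tendsto (fun j : ℕ => c ^ j * r k0) atTop (𝓝 0) := by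
      simpa using (tendsto_pow_atTop_nhds_zero_of_lt_one (le_of_lt hc0) hc2).mul_const (r k0)
    rw [← tendsto_add_atTop_iff_nat k0]
    refine squeeze_zero (fun j => (hrpos _).le) (fun j => ?_) htend0
    rw [Nat.add_comm]
    exact (hdecay j).2
  -- HasSum
  have hps : Tendsto (fun K => ∑ k ∈ range K, x (n k)) atTop (𝓝 ℓ) := by
    rw [← tendsto_add_atTop_iff_nat 1]
    have : (fun K => ∑ k ∈ range (K+1), x (n k)) = fun K => ℓ - r K := by
      funext K; exact hsum K
    rw [this]
    simpa using (tendsto_const_nhds (x := ℓ)).sub hrtend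
  have hsummable : Summable (fun k => x (n k)) := by
    apply summable_of_sum_range_le (c := ℓ)
    · intro k; exact le_of_lt (hpos _)
    · intro K
      have h3 := hsum K
      have := Finset.sum_range_succ (fun k => x (n k)) K
      have h4 := hrpos K
      have h5 := hpos (n K)
      linarith
  refine ⟨n, hmono, (hsummable.hasSum_iff_tendsto_nat).mpr hps, ℓ / c ^ (k0 + 1), ?_⟩
  intro k
  rcases Nat.lt_or_ge k (k0 + 1) with hk | hk
  · have h1 : x (n k) ≤ x (n 0) := hanti (hmono.le_iff_le.mpr (Nat.zero_le k))
    have h2 : c ^ (k0 + 1) ≤ c ^ k :=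
      pow_le_pow_of_le_one (le_of_lt hc0) (le_of_lt hc2) (by omega)
    rw [div_mul_eq_mul_div, le_div_iff₀ (by positivity)]
    calc x (n k) * c ^ (k0+1) ≤ ℓ * c ^ (k0+1) :=
          mul_le_mul_of_nonneg_right (by linarith) (pow_pos hc0 (k0+1)).le
    _ ≤ ℓ * c ^ k := mul_le_mul_of_nonneg_left h2 hℓ.le
  · -- k ≥ k0 + 1 : x (n k) ≤ r (k-1) ≤ c^(k-1-k0) r k0 ≤ c^(k-1-k0) ℓ
    obtain ⟨j, hj⟩ : ∃ j, k = (k0 + j) + 1 := ⟨k - k0 - 1, by omega⟩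
    subst hj
    have h1 : x (n (k0 + j + 1)) < r (k0 + j) := (hstep (k0+j)).2.1
    have h2 : r (k0 + j) ≤ c ^ j * r k0 := (hdecay j).2
    have h3 : r k0 ≤ ℓ := hrle k0
    have hx : x (n (k0 + j + 1)) ≤ c ^ j * ℓ := by
      have h4 := mul_le_mul_of_nonneg_left h3 (pow_pos hc0 j).le
      linarith
    rw [div_mul_eq_mul_div, le_div_iff₀ (by positivity)]
    calc x (n (k0 + j + 1)) * c ^ (k0+1) ≤ (c ^ j * ℓ) * c ^ (k0+1) :=
          mul_le_mul_of_nonneg_right hx (pow_pos hc0 (k0+1)).le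
    _ = ℓ * c ^ (k0 + j + 1) := by ring

theorem stmt_2 (x : ℕ → ℝ) (hpos : ∀ n, 0 < x n) (hanti : Antitone x)
    (hdiv : ¬ Summable x) (hlim : Tendsto x atTop (𝓝 0))
    (hliminf : (1 : ℝ) / 2 < liminf (fun n => x (n + 1) / x n) atTop) :
    ∃ θ : ℝ, θ ∈ Set.Ioo (0 : ℝ) 1 ∧
      ∀ ℓ : ℝ, 0 < ℓ → ∃ n : ℕ → ℕ, StrictMono n ∧
        HasSum (fun k => x (n k)) ℓ ∧
        ∃ C : ℝ, ∀ k, x (n k) ≤ C * θ ^ k := by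
  set l := liminf (fun n => x (n + 1) / x n) atTop with hl
  set c : ℝ := min ((1/2 + l)/2) (3/4) with hcdef
  have hc1 : 1/2 < c := lt_min (by linarith) (by norm_num)
  have hc2 : c < 1 := lt_of_le_of_lt (min_le_right _ _) (by norm_num)
  have hcl : c < l := lt_of_le_of_lt (min_le_left _ _) (by linarith)
  have hbdd : IsBoundedUnder (· ≥ ·) atTop (fun n => x (n + 1) / x n) :=
    isBoundedUnder_of ⟨0, fun n => (div_pos (hpos _) (hpos _)).le⟩
  have hev : ∀ᶠ m in atTop, c < x (m + 1) / x m := eventually_lt_of_lt_liminf hcl hbdd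
  obtain ⟨N, hN⟩ := hev.exists_forall_of_atTop
  refine ⟨c, ⟨by linarith, hc2⟩, fun ℓ hℓ => ?_⟩
  exact greedy_main x hpos hanti hdiv hlim c hc1 hc2 N
    (fun m hm => by
      have h := hN m hm
      rw [lt_div_iff₀ (hpos m)] at h
      linarith [mul_comm c (x m) ▸ h]) ℓ hℓ
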